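/- Let λ > 0, μ < 0, and set φ = −arctan(√(−μ)/λ), C_k = cos(kφ), S_k = −sin(kφ)/√(−μ). Then for every natural number k, the k-th power of A = [[λ, 1], [μ, λ]] equals (λ² − μ)^(k/2) times the matrix [[C_k, S_k], [μ·S_k, C_k]]. -/

import Mathlib

theorem matrix_power_cos_sin_form (l μ : ℝ) (hl : 0 < l) (hμ : μ < 0)
    (φ : ℝ) (hφ : φ = -Real.arctan (Real.sqrt (-μ) / l))
    (A : Matrix (Fin 2) (Fin 2) ℝ) (hA : A = !![l, 1; μ, l]) (k : ℕ)
    (Ck Sk : ℝ) (hCk : Ck = Real.cos (k * φ)) (hSk : Sk = -Real.sin (k * φ) / Real.sqrt (-μ)) :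
    A ^ k = ((l ^ 2 - μ) ^ ((k : ℝ) / 2)) • !![Ck, Sk; μ * Sk, Ck] := by
  subst hA hCk hSk
  have hμ' : (0:ℝ) < -μ := by linarith
  have hs : (0:ℝ) < Real.sqrt (-μ) := Real.sqrt_pos.mpr hμ'
  have hs2 : Real.sqrt (-μ) ^ 2 = -μ := Real.sq_sqrt hμ'.le
  have hd : (0:ℝ) < l ^ 2 - μ := by nlinarith
  have hR : (0:ℝ) < Real.sqrt (l ^ 2 - μ) := Real.sqrt_pos.mpr hd
  have hR2 : Real.sqrt (l ^ 2 - μ) ^ 2 = l ^ 2 - μ := Real.sq_sqrt hd.le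
  set s := Real.sqrt (-μ) with hsdef
  set R := Real.sqrt (l ^ 2 - μ) with hRdef
  have hsq : Real.sqrt (1 + (s / l) ^ 2) = R / l := by
    have h1 : 1 + (s / l) ^ 2 = (l ^ 2 - μ) / l ^ 2 := by
      field_simp
      nlinarith [hs2]
    rw [h1, Real.sqrt_div hd.le, hRdef, Real.sqrt_sq hl.le]
  have hcos : Real.cos φ = l / R := by
    rw [hφ, Real.cos_neg, Real.cos_arctan, hsq, one_div_div]
  have hsin : Real.sin φ = -s / R := by
    rw [hφ, Real.sin_neg, Real.sin_arctan, hsq]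
    field_simp
  have hl' : R * Real.cos φ = l := by rw [hcos]; field_simp
  have hs' : R * Real.sin φ = -s := by rw [hsin]; field_simp
  induction k with
  | zero =>
    simp only [pow_zero, Nat.cast_zero, zero_mul, Real.cos_zero, Real.sin_zero, zero_div,
      Real.rpow_zero, one_smul, neg_zero, mul_zero]
    ext i j
    fin_cases i <;> fin_cases j <;> simp [Matrix.one_apply]
  | succ k ih =>
    rw [pow_succ, ih, Matrix.smul_mul]
    push_cast
    have hpow : (l ^ 2 - μ) ^ (((k : ℕ) + 1 : ℝ) / 2) = (l ^ 2 - μ) ^ ((k : ℝ) / 2) * R := by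
      rw [show ((k : ℕ) + 1 : ℝ) / 2 = (k : ℝ) / 2 + 1 / 2 by ring, Real.rpow_add hd]
      congr 1
      rw [hRdef, Real.sqrt_eq_rpow]
    have hC : Real.cos (((k : ℝ) + 1) * φ) =
        Real.cos ((k:ℝ)*φ) * Real.cos φ - Real.sin ((k:ℝ)*φ) * Real.sin φ := by
      rw [show ((k : ℝ) + 1) * φ = (k : ℝ) * φ + φ by ring, Real.cos_add]
    have hS : Real.sin (((k : ℝ) + 1) * φ) =
        Real.sin ((k:ℝ)*φ) * Real.cos φ + Real.cos ((k:ℝ)*φ) * Real.sin φ := by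
      rw [show ((k : ℝ) + 1) * φ = (k : ℝ) * φ + φ by ring, Real.sin_add]
    rw [hpow, mul_smul]
    congr 1
    ext i j
    fin_cases i <;> fin_cases j <;>
      simp only [Matrix.mul_apply, Fin.sum_univ_two, Matrix.smul_apply, Matrix.cons_val',
        Matrix.cons_val_zero, Matrix.cons_val_one, Matrix.head_cons, Matrix.head_fin_const,
        Matrix.empty_val', Matrix.cons_val_fin_one, smul_eq_mul, Matrix.of_apply, Fin.zero_eta, Fin.mk_one] <;>
      simp only [hC, hS] <;> field_simp
    · linear_combination (-Real.cos ((k:ℝ)*φ)*s)*hl' + (Real.sin ((k:ℝ)*φ)*s)*hs'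
        + (-Real.sin ((k:ℝ)*φ))*hs2
    · linear_combination Real.sin ((k:ℝ)*φ)*hl' + Real.cos ((k:ℝ)*φ)*hs'
    · linear_combination (μ*Real.sin ((k:ℝ)*φ))*hl' + (μ*Real.cos ((k:ℝ)*φ))*hs'
    · linear_combination (-Real.cos ((k:ℝ)*φ)*s)*hl' + (Real.sin ((k:ℝ)*φ)*s)*hs'
        + (-Real.sin ((k:ℝ)*φ))*hs2
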